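/- Let β̄ ∈ R^p and g(β) = h(Xβ − b) + λq₁(β) − q₂(β), where h and q₁ are convex (hence g is locally Lipschitz and directionally differentiable when q₂ is differentiable). Then β̄ is a d-stationary point of g (i.e., g′(β̄; v) ≥ 0 for all v) if and only if for some (equivalently, for all) τ, ι ≥ 0, β̄ is a global minimizer of β ↦ h(Xβ − b) + λq₁(β) − q₂(β̄) − ⟨∇q₂(β̄), β − β̄⟩ + (τ/2)‖β − β̄‖² + (ι/2)‖X(β − β̄)‖². -/

import Mathlib

open Filter Topology
open scoped InnerProductSpace RealInnerProductSpace

set_option maxHeartbeats 1000000 in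
/-- `β̄` is a d-stationary point of `g` iff for some (equivalently, for
all) `τ, ι ≥ 0`, `β̄` globally minimizes the majorized convex model
`β ↦ h(Xβ - b) + λq₁(β) - q₂(β̄) - ⟪∇q₂(β̄), β - β̄⟫ + (τ/2)‖β - β̄‖² + (ι/2)‖X(β - β̄)‖²`. -/
theorem dstationary_iff_majorized_minimizer {n p : ℕ}
    (X : EuclideanSpace ℝ (Fin p) →L[ℝ] EuclideanSpace ℝ (Fin n))
    (b : EuclideanSpace ℝ (Fin n))
    (h : EuclideanSpace ℝ (Fin n) → ℝ) (hh_conv : ConvexOn ℝ Set.univ h)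
    (q₁ q₂ : EuclideanSpace ℝ (Fin p) → ℝ)
    (hq₁ : ConvexOn ℝ Set.univ q₁) (hq₂ : ConvexOn ℝ Set.univ q₂)
    (lam : ℝ) (hlam : 0 ≤ lam)
    (g : EuclideanSpace ℝ (Fin p) → ℝ)
    (hg : ∀ β, g β = h (X β - b) + lam * q₁ β - q₂ β)
    (βbar : EuclideanSpace ℝ (Fin p))
    (gq : EuclideanSpace ℝ (Fin p)) (hgq : HasGradientAt q₂ gq βbar)
    (dg : EuclideanSpace ℝ (Fin p) → ℝ)
    (hdg : ∀ v, Tendsto (fun t : ℝ => (g (βbar + t • v) - g βbar) / t)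
        (𝓝[>] (0 : ℝ)) (𝓝 (dg v))) :
    ((∀ v, 0 ≤ dg v) ↔
      (∃ τ ι : ℝ, 0 ≤ τ ∧ 0 ≤ ι ∧ ∀ β,
        h (X βbar - b) + lam * q₁ βbar - q₂ βbar ≤
          h (X β - b) + lam * q₁ β - q₂ βbar - ⟪gq, β - βbar⟫_ℝ +
            (τ / 2) * ‖β - βbar‖ ^ 2 + (ι / 2) * ‖X (β - βbar)‖ ^ 2)) ∧
    ((∀ v, 0 ≤ dg v) ↔
      (∀ τ ι : ℝ, 0 ≤ τ → 0 ≤ ι → ∀ β,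
        h (X βbar - b) + lam * q₁ βbar - q₂ βbar ≤
          h (X β - b) + lam * q₁ β - q₂ βbar - ⟪gq, β - βbar⟫_ℝ +
            (τ / 2) * ‖β - βbar‖ ^ 2 + (ι / 2) * ‖X (β - βbar)‖ ^ 2)) := by
  -- the convex model without quadratic terms
  set M : EuclideanSpace ℝ (Fin p) → ℝ :=
    fun β => h (X β - b) + lam * q₁ β - q₂ βbar - ⟪gq, β - βbar⟫_ℝ with hM
  have hMapp : ∀ β, M β = h (X β - b) + lam * q₁ β - q₂ βbar - ⟪gq, β - βbar⟫_ℝ :=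
    fun β => rfl
  have hMbar : M βbar = h (X βbar - b) + lam * q₁ βbar - q₂ βbar := by
    rw [hMapp, sub_self, inner_zero_right, sub_zero]
  -- directional derivative of q₂ along lines
  have hq2line : ∀ v : EuclideanSpace ℝ (Fin p),
      Tendsto (fun t : ℝ => (q₂ (βbar + t • v) - q₂ βbar) / t) (𝓝[>] (0:ℝ))
        (𝓝 (⟪gq, v⟫_ℝ)) := by
    intro v
    have hcurve : HasDerivAt (fun t : ℝ => βbar + t • v) v 0 := by
      have h1 : HasDerivAt (fun t : ℝ => t • v) ((1:ℝ) • v) 0 :=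
        (hasDerivAt_id (0:ℝ)).smul_const v
      simpa using h1.const_add βbar
    have hfd : HasFDerivAt q₂ (InnerProductSpace.toDual ℝ _ gq) (βbar + (0:ℝ) • v) := by
      simpa using hgq.hasFDerivAt
    have hcomp : HasDerivAt (fun t : ℝ => q₂ (βbar + t • v)) (⟪gq, v⟫_ℝ) 0 := by
      have := hfd.comp_hasDerivAt (0:ℝ) hcurve
      simpa [InnerProductSpace.toDual_apply_apply, Function.comp_def] using this
    have h2 : Tendsto (slope (fun t : ℝ => q₂ (βbar + t • v)) 0) (𝓝[>] (0:ℝ))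
        (𝓝 (⟪gq, v⟫_ℝ)) :=
      (hasDerivAt_iff_tendsto_slope.mp hcomp).mono_left
        (nhdsWithin_mono _ (fun x hx => ne_of_gt hx))
    refine h2.congr' ?_
    filter_upwards [self_mem_nhdsWithin] with t ht
    simp only [slope_def_field, div_eq_inv_mul, sub_zero, zero_smul, add_zero]
  -- slope of M along lines tends to dg
  have hslope : ∀ v : EuclideanSpace ℝ (Fin p),
      Tendsto (fun t : ℝ => (M (βbar + t • v) - M βbar) / t) (𝓝[>] (0:ℝ))
        (𝓝 (dg v)) := by
    intro v
    have hT : Tendsto (fun t : ℝ =>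
        (g (βbar + t • v) - g βbar) / t + (q₂ (βbar + t • v) - q₂ βbar) / t - ⟪gq, v⟫_ℝ)
        (𝓝[>] (0:ℝ)) (𝓝 (dg v + ⟪gq, v⟫_ℝ - ⟪gq, v⟫_ℝ)) :=
      ((hdg v).add (hq2line v)).sub_const _
    have heq : dg v + ⟪gq, v⟫_ℝ - ⟪gq, v⟫_ℝ = dg v := by ring
    rw [heq] at hT
    refine hT.congr' ?_
    filter_upwards [self_mem_nhdsWithin] with t ht
    have ht' : (t:ℝ) ≠ 0 := ne_of_gt ht
    have hinner : ⟪gq, (βbar + t • v) - βbar⟫_ℝ = t * ⟪gq, v⟫_ℝ := by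
      rw [add_sub_cancel_left, real_inner_smul_right]
    have hMdiff : M (βbar + t • v) - M βbar =
        (g (βbar + t • v) - g βbar) + (q₂ (βbar + t • v) - q₂ βbar) - t * ⟪gq, v⟫_ℝ := by
      rw [hMapp, hMapp, hinner, hg, hg, sub_self, inner_zero_right]
      ring
    rw [hMdiff]
    field_simp
  -- convexity of M
  have hMconv : ConvexOn ℝ Set.univ M := by
    refine ⟨convex_univ, fun x _ y _ a c ha hc hac => ?_⟩
    have hX : X (a • x + c • y) - b = a • (X x - b) + c • (X y - b) := by
      have h0 : a • (X x - b) + c • (X y - b) = a • X x + c • X y - (a + c) • b := by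
        module
      rw [h0, hac, one_smul, map_add, map_smul, map_smul]
    have h1 : h (X (a • x + c • y) - b) ≤ a * h (X x - b) + c * h (X y - b) := by
      rw [hX]
      exact hh_conv.2 (Set.mem_univ _) (Set.mem_univ _) ha hc hac
    have h2 : q₁ (a • x + c • y) ≤ a * q₁ x + c * q₁ y :=
      hq₁.2 (Set.mem_univ _) (Set.mem_univ _) ha hc hac
    have h2' : lam * q₁ (a • x + c • y) ≤ lam * (a * q₁ x + c * q₁ y) :=
      mul_le_mul_of_nonneg_left h2 hlam
    have h3 : ⟪gq, (a • x + c • y) - βbar⟫_ℝ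
        = a * ⟪gq, x - βbar⟫_ℝ + c * ⟪gq, y - βbar⟫_ℝ := by
      have hsplit : (a • x + c • y) - βbar = a • (x - βbar) + c • (y - βbar) := by
        have h0 : a • (x - βbar) + c • (y - βbar) = a • x + c • y - (a + c) • βbar := by
          module
        rw [h0, hac, one_smul]
      rw [hsplit, inner_add_right, real_inner_smul_right, real_inner_smul_right]
    have hacq : a * q₂ βbar + c * q₂ βbar = q₂ βbar := by
      rw [← add_mul, hac, one_mul]
    simp only [hMapp, smul_eq_mul]
    rw [h3]
    nlinarith [h1, h2']
  -- forward: d-stationarity implies minimization of the convex model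
  have hfwd : (∀ v, 0 ≤ dg v) → ∀ β, M βbar ≤ M β := by
    intro hd β
    have key : dg (β - βbar) ≤ M β - M βbar := by
      refine le_of_tendsto (hslope (β - βbar)) ?_
      filter_upwards [Ioc_mem_nhdsGT one_pos] with t ht
      obtain ⟨ht0, ht1⟩ := ht
      have hconvpt : M (βbar + t • (β - βbar)) ≤ (1 - t) * M βbar + t * M β := by
        have hpt : βbar + t • (β - βbar) = (1 - t) • βbar + t • β := by module
        rw [hpt]
        exact hMconv.2 (Set.mem_univ _) (Set.mem_univ _) (by linarith) (le_of_lt ht0)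
          (by ring)
      rw [div_le_iff₀ ht0]
      nlinarith
    linarith [hd (β - βbar)]
  -- backward: minimization with some τ, ι implies d-stationarity
  have hbwd : ∀ τ ι : ℝ, 0 ≤ τ → 0 ≤ ι →
      (∀ β, M βbar ≤ M β + (τ / 2) * ‖β - βbar‖ ^ 2 + (ι / 2) * ‖X (β - βbar)‖ ^ 2) →
      ∀ v, 0 ≤ dg v := by
    intro τ ι hτ hι hmin v
    have hT : Tendsto (fun t : ℝ =>
        (M (βbar + t • v) - M βbar) / t + t * ((τ / 2) * ‖v‖ ^ 2 + (ι / 2) * ‖X v‖ ^ 2))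
        (𝓝[>] (0:ℝ)) (𝓝 (dg v + 0 * ((τ / 2) * ‖v‖ ^ 2 + (ι / 2) * ‖X v‖ ^ 2))) := by
      refine (hslope v).add (Tendsto.mul_const _ ?_)
      exact tendsto_nhdsWithin_of_tendsto_nhds tendsto_id
    rw [zero_mul, add_zero] at hT
    refine ge_of_tendsto hT ?_
    filter_upwards [self_mem_nhdsWithin] with t ht
    have ht0 : (0:ℝ) < t := ht
    have hm := hmin (βbar + t • v)
    have hsub : (βbar + t • v) - βbar = t • v := by abel
    rw [hsub] at hm
    have hn1 : ‖t • v‖ ^ 2 = t ^ 2 * ‖v‖ ^ 2 := by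
      rw [norm_smul, mul_pow, Real.norm_eq_abs, sq_abs]
    have hn2 : ‖X (t • v)‖ ^ 2 = t ^ 2 * ‖X v‖ ^ 2 := by
      rw [map_smul, norm_smul, mul_pow, Real.norm_eq_abs, sq_abs]
    rw [hn1, hn2] at hm
    have key : 0 ≤ (M (βbar + t • v) - M βbar)
        + t ^ 2 * ((τ / 2) * ‖v‖ ^ 2 + (ι / 2) * ‖X v‖ ^ 2) := by nlinarith [hm]
    have h4 : 0 ≤ ((M (βbar + t • v) - M βbar)
        + t ^ 2 * ((τ / 2) * ‖v‖ ^ 2 + (ι / 2) * ‖X v‖ ^ 2)) / t :=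
      div_nonneg key ht0.le
    have h5 : ((M (βbar + t • v) - M βbar)
        + t ^ 2 * ((τ / 2) * ‖v‖ ^ 2 + (ι / 2) * ‖X v‖ ^ 2)) / t
        = (M (βbar + t • v) - M βbar) / t
          + t * ((τ / 2) * ‖v‖ ^ 2 + (ι / 2) * ‖X v‖ ^ 2) := by
      field_simp
    rw [h5] at h4
    exact h4
  -- assemble
  constructor
  · constructor
    · intro hd
      refine ⟨0, 0, le_refl _, le_refl _, fun β => ?_⟩
      have h0 := hfwd hd β
      rw [hMbar, hMapp] at h0
      have e1 : ((0:ℝ) / 2) * ‖β - βbar‖ ^ 2 = 0 := by norm_num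
      have e2 : ((0:ℝ) / 2) * ‖X (β - βbar)‖ ^ 2 = 0 := by norm_num
      rw [e1, e2, add_zero, add_zero]
      exact h0
    · rintro ⟨τ, ι, hτ, hι, hmin⟩
      refine hbwd τ ι hτ hι (fun β => ?_) 
      have h0 := hmin β
      rw [hMbar, hMapp]
      linarith
  · constructor
    · intro hd τ ι hτ hι β
      have h0 := hfwd hd β
      rw [hMbar, hMapp] at h0
      have hq1 : 0 ≤ (τ / 2) * ‖β - βbar‖ ^ 2 :=
        mul_nonneg (div_nonneg hτ (by norm_num)) (sq_nonneg _)
      have hq2' : 0 ≤ (ι / 2) * ‖X (β - βbar)‖ ^ 2 :=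
        mul_nonneg (div_nonneg hι (by norm_num)) (sq_nonneg _)
      linarith
    · intro hmin
      refine hbwd 1 1 zero_le_one zero_le_one (fun β => ?_) 
      have h0 := hmin 1 1 zero_le_one zero_le_one β
      rw [hMbar, hMapp]
      linarith
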